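/- Let x and y be elements of the alternating group A₅ on {1,2,3,4,5} such that x has order 2, y has order 5, and {x, y} generates A₅. Then there exists an automorphism σ of A₅ such that σ(y) = (12345) and σ(x) is either (12)(34) or (13)(24). -/

import Mathlib

open Equiv

set_option maxRecDepth 100000 in
set_option maxHeartbeats 8000000 in
theorem key : ∀ x y : Equiv.Perm (Fin 5), Equiv.Perm.sign x = 1 → x^2 = 1 → x ≠ 1 → y^5 = 1 → y ≠ 1 →
    x*y*x = y⁻¹ ∨ ∃ g : Equiv.Perm (Fin 5), g*y*g⁻¹ = c[0,1,2,3,4] ∧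
      (g*x*g⁻¹ = c[0,1]*c[2,3] ∨ g*x*g⁻¹ = c[0,2]*c[1,3]) := by decide

/-- If `{x, y}` generates `A₅` with `ord(x) = 2` and `ord(y) = 5`, then there is
an automorphism `σ` of `A₅` with `σ(y) = (12345)` and `σ(x)` equal to either
`(12)(34)` or `(13)(24)` (here `A₅` acts on `{0,1,2,3,4}`, shifting labels by one). -/
theorem stmt_5 (x y : ↥(alternatingGroup (Fin 5)))
    (hx : orderOf x = 2) (hy : orderOf y = 5)
    (hgen : Subgroup.closure ({x, y} : Set ↥(alternatingGroup (Fin 5))) = ⊤) :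
    ∃ σ : MulAut ↥(alternatingGroup (Fin 5)),
      (↑(σ y) : Equiv.Perm (Fin 5)) = c[0, 1, 2, 3, 4] ∧
      ((↑(σ x) : Equiv.Perm (Fin 5)) = c[0, 1] * c[2, 3] ∨
        (↑(σ x) : Equiv.Perm (Fin 5)) = c[0, 2] * c[1, 3]) := by
  have hx2 : x ^ 2 = 1 := by have := pow_orderOf_eq_one x; rwa [hx] at this
  have hy5 : y ^ 5 = 1 := by have := pow_orderOf_eq_one y; rwa [hy] at this
  have hx1 : x ≠ 1 := by rintro rfl; simp [orderOf_one] at hx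
  have hy1 : y ≠ 1 := by rintro rfl; simp [orderOf_one] at hy
  have hsign : Equiv.Perm.sign (x : Perm (Fin 5)) = 1 := x.2
  have hK := key (x : Perm (Fin 5)) (y : Perm (Fin 5)) hsign
    (by rw [← Subgroup.coe_pow, hx2, Subgroup.coe_one])
    (by simpa using fun h => hx1 (Subtype.coe_injective (by simpa using h)))
    (by rw [← Subgroup.coe_pow, hy5, Subgroup.coe_one])
    (by simpa using fun h => hy1 (Subtype.coe_injective (by simpa using h)))
  rcases hK with hd | ⟨g, hg1, hg2⟩
  · -- dihedral case: contradiction with hgen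
    exfalso
    have hd' : x * y * x = y⁻¹ := Subtype.coe_injective (by push_cast; exact hd)
    have hxinv : x⁻¹ = x := by
      rw [← mul_eq_one_iff_inv_eq, ← sq, hx2]
    have hconj : x * y * x⁻¹ = y⁻¹ := by rw [hxinv]; exact hd'
    set H := Subgroup.zpowers y with hH
    have hmap : H.map (MulEquiv.toMonoidHom (MulAut.conj x)) = H := by
      rw [hH, MonoidHom.map_zpowers]
      have e : (MulEquiv.toMonoidHom (MulAut.conj x)) y = y⁻¹ := by
        simp [MulAut.conj_apply, hconj]
      rw [e, Subgroup.zpowers_inv]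
    have hxn : x ∈ Subgroup.normalizer (H : Set ↥(alternatingGroup (Fin 5))) := by
      rw [Subgroup.mem_normalizer_iff]
      intro h
      constructor
      · intro hh
        have : (MulAut.conj x) h ∈ H.map (MulEquiv.toMonoidHom (MulAut.conj x)) :=
          Subgroup.mem_map_of_mem _ hh
        rw [hmap] at this
        simpa [MulAut.conj_apply] using this
      · intro hh
        have : (MulAut.conj x) h ∈ H := by simpa [MulAut.conj_apply] using hh
        rw [← hmap] at this
        rcases this with ⟨k, hk, he⟩
        have : k = h := (MulAut.conj x).injective he
        rwa [← this]
    have hyn : y ∈ Subgroup.normalizer (H : Set ↥(alternatingGroup (Fin 5))) := Subgroup.le_normalizer (Subgroup.mem_zpowers y)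
    have htop : Subgroup.normalizer (H : Set ↥(alternatingGroup (Fin 5))) = ⊤ := by
      rw [eq_top_iff, ← hgen, Subgroup.closure_le]
      rintro z (rfl | rfl)
      exacts [hxn, hyn]
    have hnormal : H.Normal := Subgroup.normalizer_eq_top_iff.mp htop
    rcases IsSimpleGroup.eq_bot_or_eq_top_of_normal H hnormal with hb | ht
    · have hm := Subgroup.mem_zpowers y
      rw [← hH, hb, Subgroup.mem_bot] at hm
      exact hy1 hm
    · have hcard : Nat.card H = orderOf y := Nat.card_zpowers y
      rw [ht, hy] at hcard
      rw [Subgroup.card_top] at hcard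
      have h2 : 2 * Fintype.card ↥(alternatingGroup (Fin 5)) = Fintype.card (Perm (Fin 5)) :=
        two_mul_card_alternatingGroup
      rw [Fintype.card_perm, Fintype.card_fin, ← Nat.card_eq_fintype_card] at h2
      rw [hcard] at h2
      simp [Nat.factorial] at h2
  · refine ⟨MulAut.conjNormal g, ?_, ?_⟩
    · rw [MulAut.conjNormal_apply]; exact hg1
    · rw [MulAut.conjNormal_apply]; exact hg2
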